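/- Let H0 and B be n×n complex Hermitian matrices and let f : ℝ → ℝ be continuously differentiable. Then the function s ↦ Tr f(H0 + s·B), where f is applied through the functional calculus for Hermitian matrices, is differentiable on ℝ, and its derivative at s equals Tr( f'(H0 + s·B) · B ). -/

import Mathlib

open Matrix Polynomial
open scoped ComplexOrder

/-- The functional calculus `f(H)` of an `n × n` complex Hermitian matrix `H`:
if `H = ∑ᵢ λᵢ Pᵢ` is the spectral decomposition, then `f(H) = ∑ᵢ f(λᵢ) Pᵢ`.
It is defined to be `0` if `H` is not Hermitian. -/
noncomputable def hermFun {n : ℕ} (H : Matrix (Fin n) (Fin n) ℂ) (f : ℝ → ℝ) :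
    Matrix (Fin n) (Fin n) ℂ :=
  if hH : H.IsHermitian then
    (hH.eigenvectorUnitary : Matrix (Fin n) (Fin n) ℂ) *
      Matrix.diagonal (fun i => (f (hH.eigenvalues i) : ℂ)) *
      star (hH.eigenvectorUnitary : Matrix (Fin n) (Fin n) ℂ)
  else 0

variable {n : ℕ}

lemma mconj_pow (U D : Matrix (Fin n) (Fin n) ℂ) (hU : star U * U = 1) (hU' : U * star U = 1)
    (k : ℕ) : (U * D * star U) ^ k = U * D ^ k * star U := by
  induction k with
  | zero => simpa using hU'.symm
  | succ k ih =>
    rw [pow_succ, ih, pow_succ]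
    calc U * D ^ k * star U * (U * D * star U)
        = U * D ^ k * ((star U * U) * (D * star U)) := by noncomm_ring
      _ = U * (D ^ k * D) * star U := by rw [hU]; noncomm_ring

lemma aeval_conj (U D : Matrix (Fin n) (Fin n) ℂ) (hU : star U * U = 1)
    (hU' : U * star U = 1) (p : ℝ[X]) :
    aeval (U * D * star U) p = U * aeval D p * star U := by
  rw [aeval_eq_sum_range (x := U * D * star U), aeval_eq_sum_range (x := D),
    Finset.mul_sum, Finset.sum_mul]
  refine Finset.sum_congr rfl fun i _ => ?_
  rw [mconj_pow U D hU hU', mul_smul_comm, smul_mul_assoc]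

lemma aeval_diag (d : Fin n → ℂ) (p : ℝ[X]) :
    aeval (diagonal d) p = diagonal fun i => aeval (d i) p := by
  have : (fun i => aeval (d i) p)
      = fun i => ∑ j ∈ Finset.range (p.natDegree + 1), p.coeff j • d i ^ j :=
    funext fun i => aeval_eq_sum_range _
  rw [this, aeval_eq_sum_range]
  have : Matrix.diagonal (fun i => ∑ j ∈ Finset.range (p.natDegree + 1), p.coeff j • d i ^ j)
      = ∑ j ∈ Finset.range (p.natDegree + 1),
          Matrix.diagonal (fun i => p.coeff j • d i ^ j) := by
    ext i k
    by_cases h : i = k <;> simp [Matrix.diagonal_apply, Matrix.sum_apply, h]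
  rw [this]
  refine Finset.sum_congr rfl fun j _ => ?_
  rw [show (fun i => p.coeff j • d i ^ j) = p.coeff j • (d ^ j) from rfl,
    diagonal_smul, diagonal_pow]

lemma hermFun_eq {H : Matrix (Fin n) (Fin n) ℂ} (hH : H.IsHermitian) (g : ℝ → ℝ) :
    hermFun H g = (hH.eigenvectorUnitary : Matrix (Fin n) (Fin n) ℂ) *
      Matrix.diagonal (fun i => (g (hH.eigenvalues i) : ℂ)) *
      star (hH.eigenvectorUnitary : Matrix (Fin n) (Fin n) ℂ) := dif_pos hH

lemma trace_diag_mul (d : Fin n → ℂ) (M : Matrix (Fin n) (Fin n) ℂ) :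
    trace (diagonal d * M) = ∑ i, d i * M i i := by
  simp [trace, Matrix.diag, mul_apply, diagonal_apply, ite_mul, Finset.sum_ite_eq]

section herm
variable {H : Matrix (Fin n) (Fin n) ℂ} (hH : H.IsHermitian)
include hH

lemma star_U_mul_U : star (hH.eigenvectorUnitary : Matrix (Fin n) (Fin n) ℂ) *
    (hH.eigenvectorUnitary : Matrix (Fin n) (Fin n) ℂ) = 1 := by
  exact Matrix.UnitaryGroup.star_mul_self _

lemma U_mul_star_U : (hH.eigenvectorUnitary : Matrix (Fin n) (Fin n) ℂ) *
    star (hH.eigenvectorUnitary : Matrix (Fin n) (Fin n) ℂ) = 1 := by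
  exact Matrix.mem_unitaryGroup_iff.mp (hH.eigenvectorUnitary).2

lemma aeval_hermFun (p : ℝ[X]) : aeval H p = hermFun H (fun x => p.eval x) := by
  rw [hermFun_eq hH]
  conv_lhs => rw [hH.spectral_theorem, Unitary.conjStarAlgAut_apply]
  rw [aeval_conj _ _ (star_U_mul_U hH) (U_mul_star_U hH), aeval_diag]
  have : (fun i => aeval ((RCLike.ofReal ∘ hH.eigenvalues) i) p)
      = fun i => ((eval (hH.eigenvalues i) p : ℝ) : ℂ) := by
    funext i
    rw [show (RCLike.ofReal ∘ hH.eigenvalues) i = algebraMap ℝ ℂ (hH.eigenvalues i) from rfl,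
      aeval_algebraMap_apply]
    rw [coe_aeval_eq_eval]; rfl
  rw [this]

lemma trace_hermFun (g : ℝ → ℝ) :
    trace (hermFun H g) = ∑ i, (g (hH.eigenvalues i) : ℂ) := by
  rw [hermFun_eq hH, trace_mul_cycle, star_U_mul_U hH, one_mul, trace_diagonal]

lemma trace_hermFun_mul (g : ℝ → ℝ) (B : Matrix (Fin n) (Fin n) ℂ) :
    trace (hermFun H g * B) = ∑ i, (g (hH.eigenvalues i) : ℂ) *
      ((star (hH.eigenvectorUnitary : Matrix (Fin n) (Fin n) ℂ) * B *
        (hH.eigenvectorUnitary : Matrix (Fin n) (Fin n) ℂ)) i i) := by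
  rw [hermFun_eq hH, mul_assoc, mul_assoc, trace_mul_comm, ← trace_diag_mul]
  congr 1
  noncomm_ring

end herm

section herm2
variable {H : Matrix (Fin n) (Fin n) ℂ} (hH : H.IsHermitian)
include hH

lemma U_entry_le (i j : Fin n) :
    ‖(hH.eigenvectorUnitary : Matrix (Fin n) (Fin n) ℂ) j i‖ ≤ 1 := by
  set U := (hH.eigenvectorUnitary : Matrix (Fin n) (Fin n) ℂ) with hUdef
  have h1 : (star U * U) i i = 1 := by rw [star_U_mul_U hH, Matrix.one_apply_eq]
  have h2 : (star U * U) i i = ∑ k, (Complex.normSq (U k i) : ℂ) := by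
    simp [mul_apply, star_apply, Complex.star_def, Complex.normSq_eq_conj_mul_self]
  rw [h2] at h1
  have h3 : ∑ k, Complex.normSq (U k i) = 1 := by exact_mod_cast h1
  have h4 : Complex.normSq (U j i) ≤ 1 := by
    rw [← h3]
    exact Finset.single_le_sum (f := fun k => Complex.normSq (U k i))
      (fun k _ => Complex.normSq_nonneg _) (Finset.mem_univ j)
  rw [Complex.norm_def]
  exact Real.sqrt_le_one.mpr h4

lemma conj_entry_bound (B : Matrix (Fin n) (Fin n) ℂ) (i : Fin n) :
    ‖(star (hH.eigenvectorUnitary : Matrix (Fin n) (Fin n) ℂ) * B *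
      (hH.eigenvectorUnitary : Matrix (Fin n) (Fin n) ℂ)) i i‖
      ≤ ∑ j, ∑ k, ‖B j k‖ := by
  set U := (hH.eigenvectorUnitary : Matrix (Fin n) (Fin n) ℂ) with hUdef
  have hexp : (star U * B * U) i i = ∑ k, (∑ j, star (U j i) * B j k) * U k i := by
    simp [mul_apply, star_apply, Finset.sum_mul]
  rw [hexp]
  calc ‖∑ k, (∑ j, star (U j i) * B j k) * U k i‖
      ≤ ∑ k, ‖(∑ j, star (U j i) * B j k) * U k i‖ :=
        norm_sum_le _ _
    _ ≤ ∑ k, ∑ j, ‖B j k‖ := by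
        refine Finset.sum_le_sum fun k _ => ?_
        rw [norm_mul]
        calc ‖∑ j, star (U j i) * B j k‖ * ‖U k i‖
            ≤ (∑ j, ‖B j k‖) * 1 := by
              refine mul_le_mul ?_ (U_entry_le hH i k) (norm_nonneg _) ?_
              · refine le_trans (norm_sum_le _ _) ?_
                refine Finset.sum_le_sum fun j _ => ?_
                rw [norm_mul, show star (U j i) = (starRingEnd ℂ) (U j i) from rfl,
                  Complex.norm_conj]
                calc ‖U j i‖ * ‖B j k‖
                    ≤ 1 * ‖B j k‖ :=
                      mul_le_mul_of_nonneg_right (U_entry_le hH i j) (norm_nonneg _)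
                  _ = ‖B j k‖ := one_mul _
              · exact Finset.sum_nonneg fun j _ => norm_nonneg _
          _ = ∑ j, ‖B j k‖ := mul_one _
    _ = ∑ j, ∑ k, ‖B j k‖ := by rw [Finset.sum_comm]

lemma trace_sq_eq : ∑ i, (hH.eigenvalues i)^2 = ∑ i, ∑ j, Complex.normSq (H i j) := by
  have h1 : trace (H * H) = ∑ i, (((hH.eigenvalues i)^2 : ℝ) : ℂ) := by
    have hp : H * H = aeval H ((X : ℝ[X])^2) := by
      rw [map_pow, aeval_X, pow_two]
    rw [hp, aeval_hermFun hH, trace_hermFun hH]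
    simp [pow_two]
  have h2 : trace (H * H) = ∑ i, ∑ j, (Complex.normSq (H i j) : ℂ) := by
    have hsym : ∀ i j, H j i = (starRingEnd ℂ) (H i j) := by
      intro i j
      have : Hᴴ j i = H j i := by rw [hH]
      rw [← this, conjTranspose_apply]
      rfl
    calc trace (H * H) = ∑ i, ∑ j, H i j * H j i := by
          simp [trace, Matrix.diag, mul_apply]
      _ = ∑ i, ∑ j, (Complex.normSq (H i j) : ℂ) := by
          refine Finset.sum_congr rfl fun i _ => Finset.sum_congr rfl fun j _ => ?_
          rw [hsym i j, Complex.mul_conj]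
  have h3 := h1.symm.trans h2
  exact_mod_cast h3

lemma eig_abs_le (i : Fin n) :
    |hH.eigenvalues i| ≤ Real.sqrt (∑ i, ∑ j, Complex.normSq (H i j)) := by
  have h1 : (hH.eigenvalues i)^2 ≤ ∑ i, ∑ j, Complex.normSq (H i j) := by
    rw [← trace_sq_eq hH]
    exact Finset.single_le_sum (f := fun k => (hH.eigenvalues k)^2)
      (fun k _ => sq_nonneg _) (Finset.mem_univ i)
  have h2 := Real.sqrt_le_sqrt h1
  rwa [Real.sqrt_sq_eq_abs] at h2

end herm2

section derivsec
variable (H0 B : Matrix (Fin n) (Fin n) ℂ)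

lemma hasDerivAt_trace_pow (k : ℕ) (s : ℝ) :
    HasDerivAt (fun t : ℝ => trace ((H0 + t • B)^k))
      ((k : ℂ) * trace ((H0 + s • B)^(k-1) * B)) s := by
  letI instN : NormedRing (Matrix (Fin n) (Fin n) ℂ) := Matrix.linftyOpNormedRing
  letI instA : NormedAlgebra ℝ (Matrix (Fin n) (Fin n) ℂ) := Matrix.linftyOpNormedAlgebra
  have hA : HasDerivAt (fun t : ℝ => H0 + t • B) B s := by
    have h := ((hasDerivAt_id s).smul_const B).const_add H0
    exact h.congr_deriv (one_smul ℝ B)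
  have hpow : ∀ k : ℕ, HasDerivAt (fun t : ℝ => (H0 + t • B)^k)
      (∑ j ∈ Finset.range k, (H0 + s • B)^j * B * (H0 + s • B)^(k-1-j)) s := by
    intro k
    induction k with
    | zero => exact (hasDerivAt_const s (1 : Matrix (Fin n) (Fin n) ℂ)).congr_deriv (by simp)
    | succ k ih =>
      have h := ih.fun_mul hA
      have hfun : (fun t : ℝ => (H0 + t • B)^k * (H0 + t • B))
          = fun t : ℝ => (H0 + t • B)^(k+1) := by
        funext t; rw [← pow_succ]
      rw [hfun] at h
      refine h.congr_deriv (Eq.symm ?_)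
      rw [Finset.sum_range_succ, Finset.sum_mul]
      congr 1
      · refine Finset.sum_congr rfl fun j hj => ?_
        rw [Finset.mem_range] at hj
        rw [mul_assoc _ _ (H0 + s • B), ← pow_succ,
          show k - 1 - j + 1 = k + 1 - 1 - j by omega]
      · rw [show k + 1 - 1 - k = 0 by omega, pow_zero, mul_one]
  let tr : Matrix (Fin n) (Fin n) ℂ →L[ℝ] ℂ :=
    LinearMap.toContinuousLinearMap ((Matrix.traceLinearMap (Fin n) ℂ ℂ).restrictScalars ℝ)
  have htr : ∀ M : Matrix (Fin n) (Fin n) ℂ, tr M = trace M := fun M => rfl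
  have h2 := tr.hasFDerivAt.comp_hasDerivAt s (hpow k)
  have h3 : (fun t : ℝ => tr ((H0 + t • B)^k)) = fun t : ℝ => trace ((H0 + t • B)^k) := by
    funext t; exact htr _
  rw [Function.comp_def, h3] at h2
  refine h2.congr_deriv (Eq.symm ?_)
  change _ = Matrix.trace (∑ j ∈ Finset.range k, (H0 + s • B)^j * B * (H0 + s • B)^(k-1-j)); rw [Matrix.trace_sum]
  have hterm : ∀ j ∈ Finset.range k,
      trace ((H0 + s • B)^j * B * (H0 + s • B)^(k-1-j))
        = trace ((H0 + s • B)^(k-1) * B) := by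
    intro j hj
    rw [Finset.mem_range] at hj
    rw [trace_mul_cycle, ← pow_add, show k - 1 - j + j = k - 1 by omega]
  rw [Finset.sum_congr rfl hterm, Finset.sum_const, Finset.card_range, nsmul_eq_mul]

end derivsec

lemma hasDerivAt_trace_aeval (H0 B : Matrix (Fin n) (Fin n) ℂ) (p : ℝ[X]) (s : ℝ) :
    HasDerivAt (fun t : ℝ => trace (aeval (H0 + t • B) p))
      (trace (aeval (H0 + s • B) (derivative p) * B)) s := by
  set N := p.natDegree + 1 with hN
  have hfun : ∀ t : ℝ, trace (aeval (H0 + t • B) p)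
      = ∑ i ∈ Finset.range N, p.coeff i • trace ((H0 + t • B)^i) := by
    intro t
    rw [aeval_eq_sum_range, Matrix.trace_sum]
    exact Finset.sum_congr rfl fun i _ => trace_smul _ _
  have hsum : HasDerivAt
      (fun t : ℝ => ∑ i ∈ Finset.range N, p.coeff i • trace ((H0 + t • B)^i))
      (∑ i ∈ Finset.range N, p.coeff i • ((i : ℂ) * trace ((H0 + s • B)^(i-1) * B))) s :=
    HasDerivAt.fun_sum fun i _ => (hasDerivAt_trace_pow H0 B i s).fun_const_smul (p.coeff i)
  rw [show (fun t : ℝ => trace (aeval (H0 + t • B) p))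
      = fun t => ∑ i ∈ Finset.range N, p.coeff i • trace ((H0 + t • B)^i) from funext hfun]
  convert hsum using 1
  have hd : derivative p = ∑ i ∈ Finset.range N, monomial (i-1) (p.coeff i * (i : ℝ)) := by
    conv_lhs => rw [p.as_sum_range' N (lt_add_one _)]
    rw [map_sum]
    exact Finset.sum_congr rfl fun i _ => derivative_monomial _ _
  rw [hd, map_sum, Finset.sum_mul, Matrix.trace_sum]
  refine Finset.sum_congr rfl fun i _ => ?_
  rw [aeval_monomial, ← Algebra.smul_def, smul_mul_assoc, trace_smul]
  rw [show ((i : ℂ) * trace ((H0 + s • B)^(i-1) * B))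
      = (i : ℝ) • trace ((H0 + s • B)^(i-1) * B) from by
    rw [Complex.real_smul]; push_cast; ring]
  rw [smul_smul]

noncomputable def antider (q : ℝ[X]) (c : ℝ) : ℝ[X] :=
  C c + ∑ i ∈ Finset.range (q.natDegree + 1), C (q.coeff i / ((i : ℝ) + 1)) * X ^ (i + 1)

lemma derivative_antider (q : ℝ[X]) (c : ℝ) : derivative (antider q c) = q := by
  rw [antider, map_add, derivative_C, map_sum, zero_add]
  conv_rhs => rw [q.as_sum_range' (q.natDegree + 1) (lt_add_one _)]
  refine Finset.sum_congr rfl fun i _ => ?_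
  rw [derivative_C_mul_X_pow]
  have h1 : q.coeff i / ((i : ℝ) + 1) * ((i + 1 : ℕ) : ℝ) = q.coeff i := by
    push_cast
    field_simp
  rw [h1, show (i + 1 - 1 : ℕ) = i from rfl, C_mul_X_pow_eq_monomial]

lemma antider_eval_zero (q : ℝ[X]) (c : ℝ) : (antider q c).eval 0 = c := by
  simp [antider, eval_finset_sum]

lemma approx_poly (f : ℝ → ℝ) (hf : ContDiff ℝ 1 f) (R : ℝ) (hR : 0 ≤ R) (k : ℕ) :
    ∃ p : ℝ[X],
      (∀ x ∈ Set.Icc (-R) R, |(derivative p).eval x - deriv f x| ≤ 1/(k+1)) ∧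
      (∀ x ∈ Set.Icc (-R) R, |p.eval x - f x| ≤ R/(k+1)) := by
  obtain ⟨q, hq⟩ := exists_polynomial_near_of_continuousOn (-R) R (deriv f)
    ((hf.continuous_deriv le_rfl).continuousOn) (1/(k+1)) (by positivity)
  set p := antider q (f 0) with hp
  have hq' : ∀ x ∈ Set.Icc (-R) R, |(derivative p).eval x - deriv f x| ≤ 1/(k+1) := by
    intro x hx
    rw [derivative_antider]
    exact (hq x hx).le
  refine ⟨p, hq', ?_⟩
  intro x hx
  have hconv : Convex ℝ (Set.Icc (-R) R) := convex_Icc _ _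
  have hder : ∀ y ∈ Set.Icc (-R) R, HasDerivWithinAt (fun z => p.eval z - f z)
      ((derivative p).eval y - deriv f y) (Set.Icc (-R) R) y := by
    intro y _
    exact ((p.hasDerivAt y).sub
      ((hf.differentiable one_ne_zero) y).hasDerivAt).hasDerivWithinAt
  have hbound : ∀ y ∈ Set.Icc (-R) R, ‖(derivative p).eval y - deriv f y‖ ≤ 1/(k+1) := by
    intro y hy
    simpa [Real.norm_eq_abs] using hq' y hy
  have h0 : (0 : ℝ) ∈ Set.Icc (-R) R := by constructor <;> simp [hR, neg_nonpos.mpr hR]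
  have := hconv.norm_image_sub_le_of_norm_hasDerivWithin_le hder hbound h0 hx
  have h00 : p.eval 0 - f 0 = 0 := by rw [hp, antider_eval_zero]; ring
  rw [h00] at this
  simp only [sub_zero, sub_zero, Real.norm_eq_abs] at this
  calc |p.eval x - f x| ≤ 1/(k+1) * |x| := this
    _ ≤ 1/(k+1) * R := by
        refine mul_le_mul_of_nonneg_left ?_ (by positivity)
        exact abs_le.mpr ⟨hx.1, hx.2⟩
    _ = R/(k+1) := by ring

lemma hasDerivAt_complex_re {h : ℝ → ℂ} {d : ℂ} {x : ℝ} (hh : HasDerivAt h d x) :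
    HasDerivAt (fun t => (h t).re) d.re x := by
  have := Complex.reCLM.hasFDerivAt.comp_hasDerivAt x hh
  simpa [Function.comp_def] using this

section herm3
variable {H : Matrix (Fin n) (Fin n) ℂ} (hH : H.IsHermitian)
include hH

lemma trace_hermFun_re (g : ℝ → ℝ) :
    (trace (hermFun H g)).re = ∑ i, g (hH.eigenvalues i) := by
  rw [trace_hermFun hH, Complex.re_sum]
  simp

lemma trace_hermFun_re_diff (g1 g2 : ℝ → ℝ) (ε : ℝ)
    (hg : ∀ i, |g1 (hH.eigenvalues i) - g2 (hH.eigenvalues i)| ≤ ε) :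
    |(trace (hermFun H g1)).re - (trace (hermFun H g2)).re| ≤ n * ε := by
  rw [trace_hermFun_re hH, trace_hermFun_re hH, ← Finset.sum_sub_distrib]
  refine le_trans (Finset.abs_sum_le_sum_abs _ _) ?_
  calc ∑ i, |g1 (hH.eigenvalues i) - g2 (hH.eigenvalues i)| ≤ ∑ _i : Fin n, ε :=
        Finset.sum_le_sum fun i _ => hg i
    _ = n * ε := by rw [Finset.sum_const, Finset.card_univ, Fintype.card_fin, nsmul_eq_mul]

lemma trace_hermFun_mul_re_diff (g1 g2 : ℝ → ℝ) (B : Matrix (Fin n) (Fin n) ℂ) (ε : ℝ)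
    (hε : 0 ≤ ε)
    (hg : ∀ i, |g1 (hH.eigenvalues i) - g2 (hH.eigenvalues i)| ≤ ε) :
    |(trace (hermFun H g1 * B)).re - (trace (hermFun H g2 * B)).re|
      ≤ n * (ε * ∑ j, ∑ k, ‖B j k‖) := by
  rw [trace_hermFun_mul hH g1 B, trace_hermFun_mul hH g2 B, ← Complex.sub_re,
    ← Finset.sum_sub_distrib]
  refine le_trans (Complex.abs_re_le_norm _) ?_
  refine le_trans (norm_sum_le _ _) ?_
  have hCB : (0 : ℝ) ≤ ∑ j, ∑ k, ‖B j k‖ :=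
    Finset.sum_nonneg fun j _ => Finset.sum_nonneg fun k _ => norm_nonneg _
  calc ∑ i, ‖(g1 (hH.eigenvalues i) : ℂ) *
          ((star (hH.eigenvectorUnitary : Matrix (Fin n) (Fin n) ℂ) * B *
            (hH.eigenvectorUnitary : Matrix (Fin n) (Fin n) ℂ)) i i) -
        (g2 (hH.eigenvalues i) : ℂ) *
          ((star (hH.eigenvectorUnitary : Matrix (Fin n) (Fin n) ℂ) * B *
            (hH.eigenvectorUnitary : Matrix (Fin n) (Fin n) ℂ)) i i)‖
      ≤ ∑ _i : Fin n, ε * ∑ j, ∑ k, ‖B j k‖ := by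
        refine Finset.sum_le_sum fun i _ => ?_
        rw [show (g1 (hH.eigenvalues i) : ℂ) *
            ((star (hH.eigenvectorUnitary : Matrix (Fin n) (Fin n) ℂ) * B *
              (hH.eigenvectorUnitary : Matrix (Fin n) (Fin n) ℂ)) i i) -
          (g2 (hH.eigenvalues i) : ℂ) *
            ((star (hH.eigenvectorUnitary : Matrix (Fin n) (Fin n) ℂ) * B *
              (hH.eigenvectorUnitary : Matrix (Fin n) (Fin n) ℂ)) i i)
          = ((g1 (hH.eigenvalues i) - g2 (hH.eigenvalues i) : ℝ) : ℂ) *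
            ((star (hH.eigenvectorUnitary : Matrix (Fin n) (Fin n) ℂ) * B *
              (hH.eigenvectorUnitary : Matrix (Fin n) (Fin n) ℂ)) i i) from by
          push_cast; ring]
        rw [norm_mul, Complex.norm_real, Real.norm_eq_abs]
        exact mul_le_mul (hg i) (conj_entry_bound hH B i) (norm_nonneg _) hε
    _ = n * (ε * ∑ j, ∑ k, ‖B j k‖) := by
        rw [Finset.sum_const, Finset.card_univ, Fintype.card_fin, nsmul_eq_mul]

end herm3

/-- **Differentiation of the trace.**  For `H0`, `B` Hermitian and `f : ℝ → ℝ`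
continuously differentiable, the map `s ↦ Tr f(H0 + s • B)` is differentiable
on `ℝ` with derivative `Tr(f'(H0 + s • B) · B)` at each `s`. -/
theorem hasDerivAt_trace_hermFun {n : ℕ} (H0 B : Matrix (Fin n) (Fin n) ℂ)
    (hH0 : H0.IsHermitian) (hB : B.IsHermitian) (f : ℝ → ℝ)
    (hf : ContDiff ℝ 1 f) (s : ℝ) :
    HasDerivAt (fun t : ℝ => (Matrix.trace (hermFun (H0 + t • B) f)).re)
      ((Matrix.trace (hermFun (H0 + s • B) (deriv f) * B)).re) s := by
  have hHt : ∀ t : ℝ, (H0 + t • B).IsHermitian := by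
    intro t
    have hBt : (t • B).IsHermitian := by
      have : (t • B)ᴴ = t • Bᴴ := by
        rw [conjTranspose_smul, star_trivial]
      rw [Matrix.IsHermitian, this, hB.eq]
    exact hH0.add hBt
  set CB := ∑ j, ∑ k, ‖B j k‖ with hCBdef
  have hCB0 : 0 ≤ CB :=
    Finset.sum_nonneg fun j _ => Finset.sum_nonneg fun k _ => norm_nonneg _
  set R := Real.sqrt (∑ i, ∑ j,
    (‖H0 i j‖ + (|s| + 1) * ‖B i j‖)^2) with hRdef
  have hR0 : 0 ≤ R := Real.sqrt_nonneg _
  have hlam : ∀ t ∈ Metric.ball s 1, ∀ i,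
      (hHt t).eigenvalues i ∈ Set.Icc (-R) R := by
    intro t ht i
    have h1 := eig_abs_le (hHt t) i
    have h2 : Real.sqrt (∑ i', ∑ j, Complex.normSq ((H0 + t • B) i' j)) ≤ R := by
      rw [hRdef]
      apply Real.sqrt_le_sqrt
      refine Finset.sum_le_sum fun i' _ => Finset.sum_le_sum fun j _ => ?_
      rw [← Complex.sq_norm]
      have htle : |t| ≤ |s| + 1 := by
        have hd := Metric.mem_ball.mp ht
        rw [Real.dist_eq] at hd
        calc |t| = |s + (t - s)| := by ring_nf
          _ ≤ |s| + |t - s| := abs_add_le _ _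
          _ ≤ |s| + 1 := by linarith
      have hent : ‖(H0 + t • B) i' j‖
          ≤ ‖H0 i' j‖ + (|s| + 1) * ‖B i' j‖ := by
        rw [Matrix.add_apply, Matrix.smul_apply]
        refine le_trans (norm_add_le _ _) ?_
        refine add_le_add le_rfl ?_
        rw [show (t • B i' j) = ((t : ℝ) : ℂ) * B i' j from Complex.real_smul,
          norm_mul, Complex.norm_real, Real.norm_eq_abs]
        exact mul_le_mul_of_nonneg_right htle (norm_nonneg _)
      exact pow_le_pow_left₀ (norm_nonneg _) hent 2
    exact Set.mem_Icc.mpr (abs_le.mp (le_trans h1 h2))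
  have hPex := fun k : ℕ => approx_poly f hf R hR0 k
  choose P hP1 hP2 using hPex
  have hlim : ∀ c : ℝ, Filter.Tendsto (fun k : ℕ => c * (1/(k+1))) Filter.atTop (nhds 0) := by
    intro c
    have h := tendsto_one_div_add_atTop_nhds_zero_nat.const_mul c
    simpa using h
  -- uniform convergence of derivatives
  have hunif : TendstoUniformlyOn
      (fun (k : ℕ) (t : ℝ) => (trace (aeval (H0 + t • B) (derivative (P k)) * B)).re)
      (fun t : ℝ => (trace (hermFun (H0 + t • B) (deriv f) * B)).re)
      Filter.atTop (Metric.ball s 1) := by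
    rw [Metric.tendstoUniformlyOn_iff]
    intro ε hε
    have hev := (hlim ((n : ℝ) * CB)).eventually (gt_mem_nhds hε)
    filter_upwards [hev] with k hk t ht
    rw [Real.dist_eq]
    have hq : ∀ i, |(fun x => (derivative (P k)).eval x) ((hHt t).eigenvalues i)
        - deriv f ((hHt t).eigenvalues i)| ≤ 1/(k+1) :=
      fun i => hP1 k _ (hlam t ht i)
    have hdiff := trace_hermFun_mul_re_diff (hHt t)
      (fun x => (derivative (P k)).eval x) (deriv f) B (1/(k+1)) (by positivity) hq
    rw [← aeval_hermFun (hHt t) (derivative (P k))] at hdiff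
    calc |(trace (hermFun (H0 + t • B) (deriv f) * B)).re
          - (trace (aeval (H0 + t • B) (derivative (P k)) * B)).re|
        = |(trace (aeval (H0 + t • B) (derivative (P k)) * B)).re
          - (trace (hermFun (H0 + t • B) (deriv f) * B)).re| := abs_sub_comm _ _
      _ ≤ (n : ℝ) * (1/(k+1) * CB) := hdiff
      _ = (n : ℝ) * CB * (1/(k+1)) := by ring
      _ < ε := hk
  -- pointwise convergence
  have hpt : ∀ t ∈ Metric.ball s 1,
      Filter.Tendsto (fun k : ℕ => (trace (aeval (H0 + t • B) (P k))).re) Filter.atTop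
        (nhds ((trace (hermFun (H0 + t • B) f)).re)) := by
    intro t ht
    rw [tendsto_iff_dist_tendsto_zero]
    have hb : ∀ k : ℕ, dist ((trace (aeval (H0 + t • B) (P k))).re)
        ((trace (hermFun (H0 + t • B) f)).re) ≤ (n : ℝ) * R * (1/(k+1)) := by
      intro k
      rw [Real.dist_eq, aeval_hermFun (hHt t) (P k)]
      have hq : ∀ i, |(fun x => (P k).eval x) ((hHt t).eigenvalues i)
          - f ((hHt t).eigenvalues i)| ≤ R/(k+1) :=
        fun i => hP2 k _ (hlam t ht i)
      have := trace_hermFun_re_diff (hHt t) (fun x => (P k).eval x) f (R/(k+1)) hq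
      calc |(trace (hermFun (H0 + t • B) fun x => (P k).eval x)).re
            - (trace (hermFun (H0 + t • B) f)).re| ≤ (n : ℝ) * (R/(k+1)) := this
        _ = (n : ℝ) * R * (1/(k+1)) := by ring
    exact squeeze_zero (fun k => dist_nonneg) hb (hlim ((n : ℝ) * R))
  -- each approximant is differentiable
  have hderiv : ∀ᶠ k : ℕ in Filter.atTop, ∀ t ∈ Metric.ball s 1,
      HasDerivAt (fun u : ℝ => (trace (aeval (H0 + u • B) (P k))).re)
        ((trace (aeval (H0 + t • B) (derivative (P k)) * B)).re) t :=
    Filter.Eventually.of_forall fun k t _ =>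
      hasDerivAt_complex_re (hasDerivAt_trace_aeval H0 B (P k) t)
  exact hasDerivAt_of_tendstoUniformlyOn Metric.isOpen_ball hunif hderiv hpt
    (Metric.mem_ball_self one_pos)
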